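/- Residual bias when the third treatment's confounding is ignored (the 'third treatment ignored' scenario of the simulation study): fix distinct treatments j, k ∈ J and define the partially adjusted outcome Ycf' ω := Yobs ω − p(k)·c(j, k) if A ω = j, Ycf' ω := Yobs ω − p(j)·c(k, j) if A ω = k, and Ycf' ω := Yobs ω otherwise (i.e. only the confounding functions between j and k are adjusted for, while those involving the remaining treatments are set to zero). Then (E[Ycf' | A = j] − E[Ycf' | A = k]) − E[Y j − Y k] = −Σ_{l ∈ J, l ≠ j, l ≠ k} p(l)·(c(k, l) − c(j, l)); in particular the partially adjusted contrast remains biased whenever this sum is nonzero. -/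

import Mathlib

open MeasureTheory ProbabilityTheory

noncomputable section

variable {Ω J : Type*}

/-- `condMean μ A Z j` is `E[Z | A = j]`, the mean of `Z` under the conditional
measure `μ[|{A = j}]`. -/
def condMean [MeasurableSpace Ω] (μ : Measure Ω) (A : Ω → J) (Z : Ω → ℝ) (j : J) : ℝ :=
  ∫ ω, Z ω ∂(μ[|{ω | A ω = j}])

/-- `treatProb μ A j` is `p(j) = μ{ω : A ω = j}`. -/
def treatProb [MeasurableSpace Ω] (μ : Measure Ω) (A : Ω → J) (j : J) : ℝ :=
  (μ {ω | A ω = j}).toReal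

/-- The confounding function `c(j,k) = E[Y j | A = j] - E[Y j | A = k]`. -/
def confFun [MeasurableSpace Ω] (μ : Measure Ω) (A : Ω → J) (Y : J → Ω → ℝ) (j k : J) : ℝ :=
  condMean μ A (Y j) j - condMean μ A (Y j) k

/-- The partially adjusted outcome that only corrects for the confounding functions
between the pair `(j, k)`, setting those involving the remaining treatments to zero. -/
def partialAdjOutcome [MeasurableSpace Ω] [DecidableEq J]
    (μ : Measure Ω) (A : Ω → J) (Y : J → Ω → ℝ) (j k : J) (ω : Ω) : ℝ :=
  if A ω = j then Y (A ω) ω - treatProb μ A k * confFun μ A Y j k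
  else if A ω = k then Y (A ω) ω - treatProb μ A j * confFun μ A Y k j
  else Y (A ω) ω

lemma condMean_eq_aux [MeasurableSpace Ω] (μ : Measure Ω) (A : Ω → J) (Z : Ω → ℝ) (l : J) :
    condMean μ A Z l = (treatProb μ A l)⁻¹ * ∫ ω in {ω | A ω = l}, Z ω ∂μ := by
  unfold condMean treatProb ProbabilityTheory.cond
  rw [integral_smul_measure, ENNReal.toReal_inv, smul_eq_mul]

/-- `E[Z | A = l]` where `Z` agrees with `Y ω - C` on `{A = l}`. -/
lemma condMean_shift_aux [MeasurableSpace Ω] [MeasurableSpace J] [MeasurableSingletonClass J]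
    (μ : Measure Ω) [IsProbabilityMeasure μ]
    (A : Ω → J) (hA : Measurable A)
    (Z W : Ω → ℝ) (hW : Integrable W μ) (C : ℝ) (l : J)
    (hpl : treatProb μ A l ≠ 0)
    (hZW : ∀ ω, A ω = l → Z ω = W ω - C) :
    condMean μ A Z l = condMean μ A W l - C := by
  have hsm : MeasurableSet {ω | A ω = l} := hA (measurableSet_singleton l)
  rw [condMean_eq_aux, condMean_eq_aux,
    setIntegral_congr_fun hsm (g := fun ω => W ω - C) (fun ω hω => hZW ω hω),
    integral_sub hW.restrict (integrable_const _), setIntegral_const, smul_eq_mul, mul_sub,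
    ← mul_assoc]
  have : μ.real {ω | A ω = l} = treatProb μ A l := rfl
  rw [this, inv_mul_cancel₀ hpl, one_mul]

theorem residual_bias_third_treatment_ignored
    [MeasurableSpace Ω] (μ : Measure Ω) [IsProbabilityMeasure μ]
    [Fintype J] [Nonempty J] [DecidableEq J] [MeasurableSpace J] [MeasurableSingletonClass J]
    (A : Ω → J) (hA : Measurable A)
    (Y : J → Ω → ℝ) (hY : ∀ j, Integrable (Y j) μ)
    (hp : ∀ j, 0 < treatProb μ A j)
    (j k : J) (hjk : j ≠ k) :
    (condMean μ A (partialAdjOutcome μ A Y j k) j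
        - condMean μ A (partialAdjOutcome μ A Y j k) k)
        - ∫ ω, (Y j ω - Y k ω) ∂μ
      = -∑ l ∈ Finset.univ.filter (fun l => l ≠ j ∧ l ≠ k),
          treatProb μ A l * (confFun μ A Y k l - confFun μ A Y j l) := by
  classical
  set s : J → Set Ω := fun l => {ω | A ω = l} with hs
  have hsm : ∀ l, MeasurableSet (s l) := fun l => hA (measurableSet_singleton l)
  have hpne : ∀ l, treatProb μ A l ≠ 0 := fun l => (hp l).ne'
  set p : J → ℝ := treatProb μ A with hpdef
  set M : J → J → ℝ := fun a b => condMean μ A (Y a) b with hM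
  set filt := Finset.univ.filter (fun l => l ≠ j ∧ l ≠ k) with hfilt
  -- set integral of Y a over s l in terms of condMean
  have hset : ∀ a l, ∫ ω in s l, Y a ω ∂μ = p l * M a l := by
    intro a l
    rw [hM]
    simp only
    rw [condMean_eq_aux, ← mul_assoc, mul_inv_cancel₀ (hpne l), one_mul]
  -- condMean of partialAdjOutcome at j and k
  have h1 : condMean μ A (partialAdjOutcome μ A Y j k) j
      = M j j - p k * (M j j - M j k) :=
    condMean_shift_aux μ A hA _ (Y j) (hY j) _ j (hpne j)
      (fun ω hω => by simp [partialAdjOutcome, hω, confFun, hM, hpdef])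
  have h2 : condMean μ A (partialAdjOutcome μ A Y j k) k
      = M k k - p j * (M k k - M k j) :=
    condMean_shift_aux μ A hA _ (Y k) (hY k) _ k (hpne k)
      (fun ω hω => by simp [partialAdjOutcome, hω, hjk.symm, confFun, hM, hpdef])
  -- law of total expectation
  have htot : ∀ a, ∫ ω, Y a ω ∂μ = ∑ l, p l * M a l := by
    intro a
    have hdisj : Pairwise (Function.onFun Disjoint s) := by
      intro a b hab
      simp only [Function.onFun, Set.disjoint_left, hs, Set.mem_setOf_eq]
      rintro ω rfl
      exact hab
    have hU : (⋃ l, s l) = Set.univ := by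
      ext ω; simp [hs]
    have := integral_iUnion hsm hdisj ((hY a).integrableOn.mono_set (Set.subset_univ _))
    rw [hU, Measure.restrict_univ] at this
    rw [this, tsum_fintype]
    exact Finset.sum_congr rfl fun l _ => hset a l
  -- splitting sums over the partition {j}, {k}, rest
  have hsplit : ∀ f : J → ℝ, ∑ l, f l = f j + f k + ∑ l ∈ filt, f l := by
    intro f
    have hins : (Finset.univ : Finset J) = insert j (insert k filt) := by
      ext l
      simp only [Finset.mem_univ, Finset.mem_insert, hfilt, Finset.mem_filter, true_and, true_iff]
      by_cases h1 : l = j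
      · tauto
      · by_cases h2 : l = k <;> tauto
    have hjnot : j ∉ insert k filt := by
      simp [hfilt, hjk]
    have hknot : k ∉ filt := by
      simp [hfilt]
    rw [hins, Finset.sum_insert hjnot, Finset.sum_insert hknot]
    ring
  -- sum of probabilities is 1
  have hone : ∑ l, p l = 1 := by
    have : ∑ l, μ (s l) = 1 := by
      have h := sum_measure_preimage_singleton (μ := μ) (Finset.univ : Finset J)
        (fun y _ => measurableSet_preimage hA (measurableSet_singleton y))
      simp only [Finset.coe_univ, Set.preimage_univ, measure_univ] at h
      rw [← h]
      rfl
    have h2 := congrArg ENNReal.toReal this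
    rw [ENNReal.toReal_sum (fun a _ => measure_ne_top μ _)] at h2
    simpa [hpdef, treatProb, hs] using h2
  -- rewrite the integral of the difference
  have hint : ∫ ω, (Y j ω - Y k ω) ∂μ = (∑ l, p l * M j l) - ∑ l, p l * M k l := by
    rw [integral_sub (hY j) (hY k), htot j, htot k]
  -- put everything together
  rw [h1, h2, hint, hsplit (fun l => p l * M j l), hsplit (fun l => p l * M k l)]
  have hconf : ∀ a b, confFun μ A Y a b = M a a - M a b := fun a b => rfl
  have hR : ∑ l ∈ filt, treatProb μ A l * (confFun μ A Y k l - confFun μ A Y j l)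
      = (M k k - M j j) * (∑ l ∈ filt, p l)
        + ((∑ l ∈ filt, p l * M j l) - ∑ l ∈ filt, p l * M k l) := by
    rw [Finset.mul_sum, ← Finset.sum_sub_distrib, ← Finset.sum_add_distrib]
    refine Finset.sum_congr rfl fun l _ => ?_
    rw [hconf, hconf, ← hpdef]
    ring
  rw [hR]
  have hone' := (hsplit p).symm.trans hone
  linear_combination (M k k - M j j) * hone'

end
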